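/- Let β_1, β_2, β_3, β_4 be four mutually orthogonal roots in a simply laced root system Φ with every root of squared length 2, and suppose γ = (β_1 + β_2 + β_3 + β_4)/2 lies in Φ. Then the set Ψ = {±β_1, ±β_2, ±β_3, ±β_4} ∪ {(±β_1 ± β_2 ± β_3 ± β_4)/2 : all sign choices} is contained in Φ and is a root system of type D_4 (i.e., it is isometric to {±e_i ± e_j : 1 ≤ i < j ≤ 4}). -/

import Mathlib

open scoped RealInnerProductSpace

/-- Four mutually orthogonal roots in a simply laced root system whose half-sum is a root
generate a `D_4` subsystem `Ψ = {±β_i} ∪ {(±β_1 ± β_2 ± β_3 ± β_4)/2}`, which is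
contained in `Φ` and isometric to `{±e_i ± e_j : 1 ≤ i < j ≤ 4}`. -/
noncomputable def sgl (k : Fin 4) : EuclideanSpace ℝ (Fin 4) := EuclideanSpace.single k 1

noncomputable def bb : Fin 4 → EuclideanSpace ℝ (Fin 4) :=
  ![sgl 0 + sgl 1, sgl 0 - sgl 1, sgl 2 + sgl 3, sgl 2 - sgl 3]

lemma bb0 : bb 0 = sgl 0 + sgl 1 := rfl
lemma bb1 : bb 1 = sgl 0 - sgl 1 := rfl
lemma bb2 : bb 2 = sgl 2 + sgl 3 := rfl
lemma bb3 : bb 3 = sgl 2 - sgl 3 := rfl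

lemma sgl_inner (i j : Fin 4) : ⟪sgl i, sgl j⟫ = if i = j then (1:ℝ) else 0 := by
  rcases eq_or_ne i j with rfl | h
  · simp [sgl, EuclideanSpace.inner_single_left, EuclideanSpace.single_apply]
  · simp [sgl, EuclideanSpace.inner_single_left, EuclideanSpace.single_apply, h, Ne.symm h]

lemma bb_inner (i j : Fin 4) : ⟪bb i, bb j⟫ = if i = j then (2:ℝ) else 0 := by
  fin_cases i <;> fin_cases j <;>
    simp (config := { decide := true }) [bb, inner_add_left, inner_add_right, inner_sub_left,
      inner_sub_right, sgl_inner, -PiLp.inner_apply, -inner_self_eq_norm_sq_to_K, Fin.ext_iff, Fin.val_natCast] <;> norm_num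

lemma ip_sum {V : Type*} [NormedAddCommGroup V] [InnerProductSpace ℝ V]
    (v : Fin 4 → V) (hv : ∀ i j, ⟪v i, v j⟫ = if i = j then (2:ℝ) else 0)
    (c d : Fin 4 → ℝ) :
    ⟪∑ i, c i • v i, ∑ i, d i • v i⟫ = 2 * ∑ i, c i * d i := by
  rw [inner_sum]
  simp only [sum_inner, real_inner_smul_left, real_inner_smul_right, hv]
  rw [Finset.mul_sum]
  refine Finset.sum_congr rfl fun j _ => ?_
  rw [Finset.sum_eq_single j (fun i _ hij => by rw [if_neg hij]; ring) (by simp)]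
  simp; ring

lemma half_smul_sum {W : Type*} [AddCommGroup W] [Module ℝ W] (e : Fin 4 → ℝ) (v : Fin 4 → W) :
    (2:ℝ)⁻¹ • ∑ i, e i • v i = ∑ i, (e i / 2) • v i := by
  rw [Finset.smul_sum]
  refine Finset.sum_congr rfl fun i _ => ?_
  rw [smul_smul]; congr 1; ring

lemma sum_single_smul {W : Type*} [AddCommGroup W] [Module ℝ W] (v : Fin 4 → W) (i : Fin 4) :
    ∑ j, (Pi.single i (1:ℝ) : Fin 4 → ℝ) j • v j = v i := by
  simp [Pi.single_apply, ite_smul]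

lemma sum_neg_single_smul {W : Type*} [AddCommGroup W] [Module ℝ W] (v : Fin 4 → W) (i : Fin 4) :
    ∑ j, (-(Pi.single i (1:ℝ) : Fin 4 → ℝ)) j • v j = -v i := by
  simp [Pi.single_apply, ite_smul]

/-- membership of `bb i` in the D4 set -/
lemma bb_mem (i : Fin 4) (s : ℝ) (hs : s = 1 ∨ s = -1) :
    ∃ (a b : Fin 4) (u t : ℝ), a < b ∧ (u = 1 ∨ u = -1) ∧ (t = 1 ∨ t = -1) ∧
      s • bb i = u • EuclideanSpace.single a (1:ℝ) + t • EuclideanSpace.single b (1:ℝ) := by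
  fin_cases i <;> simp only [Fin.zero_eta, Fin.mk_one, Fin.reduceFinMk]
  · exact ⟨0, 1, s, s, by decide, hs, hs, by rw [bb0]; simp only [sgl]; module⟩
  · exact ⟨0, 1, s, -s, by decide, hs, by rcases hs with rfl | rfl <;> norm_num,
      by rw [bb1]; simp only [sgl]; module⟩
  · exact ⟨2, 3, s, s, by decide, hs, hs, by rw [bb2]; simp only [sgl]; module⟩
  · exact ⟨2, 3, s, -s, by decide, hs, by rcases hs with rfl | rfl <;> norm_num,
      by rw [bb3]; simp only [sgl]; module⟩

/-- membership of the half-sums in the D4 set -/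
lemma half_bb_mem (e : Fin 4 → ℝ) (he : ∀ i, e i = 1 ∨ e i = -1) :
    ∃ (a b : Fin 4) (u t : ℝ), a < b ∧ (u = 1 ∨ u = -1) ∧ (t = 1 ∨ t = -1) ∧
      (2:ℝ)⁻¹ • (∑ i, e i • bb i) =
        u • EuclideanSpace.single a (1:ℝ) + t • EuclideanSpace.single b (1:ℝ) := by
  rw [Fin.sum_univ_four, bb0, bb1, bb2, bb3]
  rcases he 0 with h0 | h0 <;> rcases he 1 with h1 | h1 <;>
    rcases he 2 with h2 | h2 <;> rcases he 3 with h3 | h3 <;>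
    rw [h0, h1, h2, h3] <;>
    [ exact ⟨0, 2, 1, 1, by decide, Or.inl rfl, Or.inl rfl, by simp only [sgl]; module⟩;
      exact ⟨0, 3, 1, 1, by decide, Or.inl rfl, Or.inl rfl, by simp only [sgl]; module⟩;
      exact ⟨0, 3, 1, -1, by decide, Or.inl rfl, Or.inr rfl, by simp only [sgl]; module⟩;
      exact ⟨0, 2, 1, -1, by decide, Or.inl rfl, Or.inr rfl, by simp only [sgl]; module⟩;
      exact ⟨1, 2, 1, 1, by decide, Or.inl rfl, Or.inl rfl, by simp only [sgl]; module⟩;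
      exact ⟨1, 3, 1, 1, by decide, Or.inl rfl, Or.inl rfl, by simp only [sgl]; module⟩;
      exact ⟨1, 3, 1, -1, by decide, Or.inl rfl, Or.inr rfl, by simp only [sgl]; module⟩;
      exact ⟨1, 2, 1, -1, by decide, Or.inl rfl, Or.inr rfl, by simp only [sgl]; module⟩;
      exact ⟨1, 2, -1, 1, by decide, Or.inr rfl, Or.inl rfl, by simp only [sgl]; module⟩;
      exact ⟨1, 3, -1, 1, by decide, Or.inr rfl, Or.inl rfl, by simp only [sgl]; module⟩;
      exact ⟨1, 3, -1, -1, by decide, Or.inr rfl, Or.inr rfl, by simp only [sgl]; module⟩;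
      exact ⟨1, 2, -1, -1, by decide, Or.inr rfl, Or.inr rfl, by simp only [sgl]; module⟩;
      exact ⟨0, 2, -1, 1, by decide, Or.inr rfl, Or.inl rfl, by simp only [sgl]; module⟩;
      exact ⟨0, 3, -1, 1, by decide, Or.inr rfl, Or.inl rfl, by simp only [sgl]; module⟩;
      exact ⟨0, 3, -1, -1, by decide, Or.inr rfl, Or.inr rfl, by simp only [sgl]; module⟩;
      exact ⟨0, 2, -1, -1, by decide, Or.inr rfl, Or.inr rfl, by simp only [sgl]; module⟩ ]

/-- every D4 vector is of one of the three shapes -/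
lemma target_rep (i j : Fin 4) (hij : i < j) (s t : ℝ) (hs : s = 1 ∨ s = -1)
    (ht : t = 1 ∨ t = -1) :
    (∃ (k : Fin 4) (r : ℝ), (r = 1 ∨ r = -1) ∧
        s • EuclideanSpace.single i (1:ℝ) + t • EuclideanSpace.single j (1:ℝ) = r • bb k) ∨
      ∃ e : Fin 4 → ℝ, (∀ k, e k = 1 ∨ e k = -1) ∧
        s • EuclideanSpace.single i (1:ℝ) + t • EuclideanSpace.single j (1:ℝ) =
          (2:ℝ)⁻¹ • (∑ k, e k • bb k) := by
  have hnegs : -s = 1 ∨ -s = -1 := by rcases hs with rfl | rfl <;> norm_num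
  have hnegt : -t = 1 ∨ -t = -1 := by rcases ht with rfl | rfl <;> norm_num
  fin_cases i <;> fin_cases j <;>
      simp only [Fin.zero_eta, Fin.mk_one, Fin.reduceFinMk] at hij ⊢ <;> first
    | exact absurd hij (by decide)
    | skip
  -- remaining pairs in order: (0,1), (0,2), (0,3), (1,2), (1,3), (2,3)
  · -- (0,1)
    rcases hs with rfl | rfl <;> rcases ht with rfl | rfl
    · exact Or.inl ⟨0, 1, Or.inl rfl, by rw [bb0]; simp only [sgl]; module⟩
    · exact Or.inl ⟨1, 1, Or.inl rfl, by rw [bb1]; simp only [sgl]; module⟩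
    · exact Or.inl ⟨1, -1, Or.inr rfl, by rw [bb1]; simp only [sgl]; module⟩
    · exact Or.inl ⟨0, -1, Or.inr rfl, by rw [bb0]; simp only [sgl]; module⟩
  · -- (0,2)
    refine Or.inr ⟨![s, s, t, t], fun k => by fin_cases k <;> first | exact hs | exact ht | exact hnegs | exact hnegt, ?_⟩
    rw [Fin.sum_univ_four]
    simp only [Matrix.cons_val_zero, Matrix.cons_val_one, Matrix.head_cons, Matrix.cons_val_two,
      Matrix.tail_cons, Matrix.cons_val_three, bb0, bb1, bb2, bb3, sgl]
    module
  · -- (0,3)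
    refine Or.inr ⟨![s, s, t, -t], fun k => by fin_cases k <;> first | exact hs | exact ht | exact hnegs | exact hnegt, ?_⟩
    rw [Fin.sum_univ_four]
    simp only [Matrix.cons_val_zero, Matrix.cons_val_one, Matrix.head_cons, Matrix.cons_val_two,
      Matrix.tail_cons, Matrix.cons_val_three, bb0, bb1, bb2, bb3, sgl]
    module
  · -- (1,2)
    refine Or.inr ⟨![s, -s, t, t], fun k => by fin_cases k <;> first | exact hs | exact ht | exact hnegs | exact hnegt, ?_⟩
    rw [Fin.sum_univ_four]
    simp only [Matrix.cons_val_zero, Matrix.cons_val_one, Matrix.head_cons, Matrix.cons_val_two,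
      Matrix.tail_cons, Matrix.cons_val_three, bb0, bb1, bb2, bb3, sgl]
    module
  · -- (1,3)
    refine Or.inr ⟨![s, -s, t, -t], fun k => by fin_cases k <;> first | exact hs | exact ht | exact hnegs | exact hnegt, ?_⟩
    rw [Fin.sum_univ_four]
    simp only [Matrix.cons_val_zero, Matrix.cons_val_one, Matrix.head_cons, Matrix.cons_val_two,
      Matrix.tail_cons, Matrix.cons_val_three, bb0, bb1, bb2, bb3, sgl]
    module
  · -- (2,3)
    rcases hs with rfl | rfl <;> rcases ht with rfl | rfl
    · exact Or.inl ⟨2, 1, Or.inl rfl, by rw [bb2]; simp only [sgl]; module⟩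
    · exact Or.inl ⟨3, 1, Or.inl rfl, by rw [bb3]; simp only [sgl]; module⟩
    · exact Or.inl ⟨3, -1, Or.inr rfl, by rw [bb3]; simp only [sgl]; module⟩
    · exact Or.inl ⟨2, -1, Or.inr rfl, by rw [bb2]; simp only [sgl]; module⟩

theorem stmt2 {V : Type*} [NormedAddCommGroup V] [InnerProductSpace ℝ V]
    (Φ : Set V) (hfin : Φ.Finite)
    (hlen : ∀ α ∈ Φ, ⟪α, α⟫ = (2 : ℝ))
    (hrefl : ∀ α ∈ Φ, ∀ β ∈ Φ, β - ⟪α, β⟫ • α ∈ Φ)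
    (β : Fin 4 → V) (hβ : ∀ i, β i ∈ Φ)
    (horth : ∀ i j, i ≠ j → ⟪β i, β j⟫ = (0 : ℝ))
    (hγ : (2 : ℝ)⁻¹ • (β 0 + β 1 + β 2 + β 3) ∈ Φ)
    (Ψ : Set V)
    (hΨ : Ψ = {v | (∃ i, v = β i ∨ v = -β i) ∨
      ∃ e : Fin 4 → ℝ, (∀ i, e i = 1 ∨ e i = -1) ∧ v = (2 : ℝ)⁻¹ • (∑ i, e i • β i)}) :
    Ψ ⊆ Φ ∧
    ∃ φ : V → EuclideanSpace ℝ (Fin 4),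
      Set.InjOn φ Ψ ∧
      (∀ x ∈ Ψ, ∀ y ∈ Ψ, ⟪φ x, φ y⟫ = ⟪x, y⟫) ∧
      φ '' Ψ = {w : EuclideanSpace ℝ (Fin 4) | ∃ (i j : Fin 4) (s t : ℝ),
        i < j ∧ (s = 1 ∨ s = -1) ∧ (t = 1 ∨ t = -1) ∧
        w = s • EuclideanSpace.single i (1 : ℝ) + t • EuclideanSpace.single j (1 : ℝ)} := by
  have hββ : ∀ i j, ⟪β i, β j⟫ = if i = j then (2:ℝ) else 0 := by
    intro i j
    rcases eq_or_ne i j with rfl | h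
    · simpa using hlen _ (hβ i)
    · simpa [h] using horth i j h
  have hβsum : β 0 + β 1 + β 2 + β 3 = ∑ i, β i := (Fin.sum_univ_four β).symm
  set γ : V := (2:ℝ)⁻¹ • (β 0 + β 1 + β 2 + β 3) with hγdef
  have hγβ : ∀ i, ⟪β i, γ⟫ = 1 := by
    intro i
    rw [hγdef, hβsum, real_inner_smul_right, inner_sum]
    simp only [hββ]
    rw [Finset.sum_ite_eq Finset.univ i (fun _ => (2:ℝ))]
    simp
  have hneg : ∀ α ∈ Φ, -α ∈ Φ := by
    intro α hα
    have h := hrefl α hα α hα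
    rw [hlen α hα] at h
    have : α - (2:ℝ) • α = -α := by module
    rwa [this] at h
  have hstep : ∀ x ∈ Φ, ∀ i, ⟪β i, x⟫ = 1 → x - β i ∈ Φ := by
    intro x hx i h1
    have h := hrefl (β i) (hβ i) x hx
    rwa [h1, one_smul] at h
  have hminusS : ∀ S : Finset (Fin 4), γ - ∑ i ∈ S, β i ∈ Φ := by
    intro S
    induction S using Finset.induction with
    | empty => simpa using hγ
    | @insert a s ha ih =>
      have h1 : ⟪β a, γ - ∑ i ∈ s, β i⟫ = 1 := by
        rw [inner_sub_right, inner_sum]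
        have hz : ∑ i ∈ s, ⟪β a, β i⟫ = 0 :=
          Finset.sum_eq_zero fun i hi => horth a i (by rintro rfl; exact ha hi)
        rw [hz, hγβ]; ring
      have h2 := hstep _ (ih) a h1
      rw [Finset.sum_insert ha]
      have : γ - (β a + ∑ i ∈ s, β i) = γ - ∑ i ∈ s, β i - β a := by abel
      rwa [this]
  have hhalfΦ : ∀ e : Fin 4 → ℝ, (∀ i, e i = 1 ∨ e i = -1) →
      (2:ℝ)⁻¹ • (∑ i, e i • β i) ∈ Φ := by
    intro e he
    have key : (2:ℝ)⁻¹ • (∑ i, e i • β i)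
        = γ - ∑ i ∈ Finset.univ.filter (fun i => e i = -1), β i := by
      rw [hγdef, hβsum, Finset.sum_filter, Finset.smul_sum, Finset.smul_sum,
        ← Finset.sum_sub_distrib]
      refine Finset.sum_congr rfl fun i _ => ?_
      rcases he i with h | h
      · rw [h, if_neg (by norm_num : ¬(1:ℝ) = -1)]
        module
      · rw [h, if_pos rfl]
        module
    rw [key]
    exact hminusS _
  have hΨΦ : Ψ ⊆ Φ := by
    rw [hΨ]
    rintro x (⟨i, rfl | rfl⟩ | ⟨e, he, rfl⟩)
    · exact hβ i
    · exact hneg _ (hβ i)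
    · exact hhalfΦ e he
  set φ : V → EuclideanSpace ℝ (Fin 4) := fun v => ∑ i, (⟪β i, v⟫ / 2) • bb i with hφdef
  have hφc : ∀ c : Fin 4 → ℝ, φ (∑ i, c i • β i) = ∑ i, c i • bb i := by
    intro c
    simp only [hφdef]
    refine Finset.sum_congr rfl fun j _ => ?_
    congr 1
    rw [inner_sum]
    simp only [real_inner_smul_right, hββ]
    have h2 : ∀ i, c i * (if j = i then (2:ℝ) else 0) = if j = i then 2 * c i else 0 :=
      fun i => by split <;> ring
    rw [Finset.sum_congr rfl fun i _ => h2 i, Finset.sum_ite_eq Finset.univ j]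
    simp
  have hφβ : ∀ i, φ (β i) = bb i := by
    intro i
    rw [show β i = ∑ j, (Pi.single i 1 : Fin 4 → ℝ) j • β j from (sum_single_smul β i).symm, hφc,
      sum_single_smul bb i]
  have hφnβ : ∀ i, φ (-β i) = -bb i := by
    intro i
    rw [show -β i = ∑ j, (-(Pi.single i 1 : Fin 4 → ℝ)) j • β j from (sum_neg_single_smul β i).symm, hφc,
      sum_neg_single_smul bb i]
  have hφh : ∀ e : Fin 4 → ℝ, φ ((2:ℝ)⁻¹ • ∑ i, e i • β i) = (2:ℝ)⁻¹ • ∑ i, e i • bb i := by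
    intro e
    rw [half_smul_sum e β, hφc, ← half_smul_sum e bb]
  have hrep : ∀ x ∈ Ψ, ∃ c : Fin 4 → ℝ, x = ∑ i, c i • β i ∧ φ x = ∑ i, c i • bb i := by
    rw [hΨ]
    rintro x (⟨i, rfl | rfl⟩ | ⟨e, he, rfl⟩)
    · exact ⟨Pi.single i 1, (sum_single_smul β i).symm, by
        rw [hφβ i, sum_single_smul bb i]⟩
    · exact ⟨-Pi.single i 1, (sum_neg_single_smul β i).symm, by
        rw [hφnβ i, sum_neg_single_smul bb i]⟩
    · exact ⟨fun i => e i / 2, half_smul_sum e β, by rw [hφh e, half_smul_sum e bb]⟩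
  have hip : ∀ x ∈ Ψ, ∀ y ∈ Ψ, ⟪φ x, φ y⟫ = ⟪x, y⟫ := by
    intro x hx y hy
    obtain ⟨c, hcx, hcφ⟩ := hrep x hx
    obtain ⟨d, hdx, hdφ⟩ := hrep y hy
    rw [hcφ, hdφ, ip_sum bb bb_inner]
    rw [hcx, hdx, ip_sum β hββ]
  have hinj : Set.InjOn φ Ψ := by
    intro x hx y hy hxy
    have h0 : ⟪x - y, x - y⟫ = (0:ℝ) := by
      rw [real_inner_sub_sub_self, ← hip x hx x hx, ← hip x hx y hy, ← hip y hy y hy, hxy]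
      ring
    rwa [inner_self_eq_zero, sub_eq_zero] at h0
  refine ⟨hΨΦ, φ, hinj, hip, ?_⟩
  ext w
  constructor
  · rintro ⟨x, hx, rfl⟩
    have hx' := hx
    rw [hΨ] at hx'
    obtain ⟨i, rfl | rfl⟩ | ⟨e, he, rfl⟩ := hx'
    · obtain ⟨a, b, u, t, hab, hu, ht', heq⟩ := bb_mem i 1 (Or.inl rfl)
      exact ⟨a, b, u, t, hab, hu, ht', by rw [hφβ i, ← one_smul ℝ (bb i), heq]⟩
    · obtain ⟨a, b, u, t, hab, hu, ht', heq⟩ := bb_mem i (-1) (Or.inr rfl)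
      exact ⟨a, b, u, t, hab, hu, ht', by
        rw [hφnβ i, show -bb i = (-1 : ℝ) • bb i by module, heq]⟩
    · obtain ⟨a, b, u, t, hab, hu, ht', heq⟩ := half_bb_mem e he
      exact ⟨a, b, u, t, hab, hu, ht', by rw [hφh e, heq]⟩
  · rintro ⟨i, j, s, t, hij, hs, ht, rfl⟩
    rcases target_rep i j hij s t hs ht with ⟨k, r, hr, heq⟩ | ⟨e, he, heq⟩
    · rcases hr with rfl | rfl
      · exact ⟨β k, by rw [hΨ]; exact Or.inl ⟨k, Or.inl rfl⟩, by rw [hφβ k, heq, one_smul]⟩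
      · exact ⟨-β k, by rw [hΨ]; exact Or.inl ⟨k, Or.inr rfl⟩, by
          rw [hφnβ k, heq]; module⟩
    · exact ⟨(2:ℝ)⁻¹ • ∑ i, e i • β i, by rw [hΨ]; exact Or.inr ⟨e, he, rfl⟩, by
        rw [hφh e, heq]⟩
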